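/- Let w ≥ 2 be an even integer and f : ℚ → ℂ a function satisfying f(x) = f(x+1) for all x ∈ ℚ and f(x) = x^w · f(-1/x) for all nonzero x ∈ ℚ. Then there exists c ∈ ℂ such that f(k/h) = c · (gcd(h,k)/h)^w for all integers h > 0 and k ∈ ℤ. -/

import Mathlib

section
variable (w : ℕ) (f : ℚ → ℂ)

lemma aux_per (hper : ∀ x : ℚ, f x = f (x + 1)) :
    ∀ (n : ℤ) (x : ℚ), f (x + n) = f x := by
  intro n
  induction n using Int.induction_on with
  | zero => simp
  | succ n ih =>
    intro x
    have h1 : (x + ((n : ℤ) + 1 : ℤ) : ℚ) = (x + (n : ℤ)) + 1 := by push_cast; ring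
    rw [h1, ← hper, ih]
  | pred n ih =>
    intro x
    have h1 : (x + (-(n : ℤ) - 1 : ℤ) : ℚ) + 1 = x + (-(n : ℤ) : ℤ) := by push_cast; ring
    rw [← ih x, ← h1, ← hper]

lemma aux_key (hper : ∀ x : ℚ, f x = f (x + 1))
    (hmod : ∀ x : ℚ, x ≠ 0 → f x = (x : ℂ) ^ w * f (-1 / x)) :
    ∀ q : ℕ, ∀ p : ℤ, 0 < q → Int.gcd (q : ℤ) p = 1 →
      f ((p : ℚ) / (q : ℚ)) = f 0 / (q : ℂ) ^ w := by
  intro q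
  induction q using Nat.strong_induction_on with
  | _ q ih =>
    intro p hq hgcd
    rcases eq_or_lt_of_le (show 1 ≤ q from hq) with h1 | h2
    · -- q = 1
      have hq1 : q = 1 := h1.symm
      subst hq1
      have : ((p : ℚ) / 1) = 0 + (p : ℚ) := by ring
      simp only [Nat.cast_one, this]
      rw [show ((p:ℚ) : ℚ) = ((p : ℤ) : ℚ) by norm_num, aux_per f hper p 0]
      simp
    · -- q ≥ 2
      have hqz : (q : ℤ) ≠ 0 := by positivity
      set r : ℤ := p % q with hr
      have hr0 : 0 ≤ r := Int.emod_nonneg p hqz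
      have hrlt : r < q := Int.emod_lt_of_pos p (by exact_mod_cast hq)
      have hco : IsCoprime (q : ℤ) p := Int.isCoprime_iff_gcd_eq_one.mpr hgcd
      have hcor : IsCoprime (q : ℤ) r := by
        have : r = p + (q : ℤ) * (-(p / q)) := by
          rw [hr]; rw [Int.emod_def]; ring
        rw [this]
        exact hco.add_mul_left_right _
      have hrne : r ≠ 0 := by
        intro h0
        rw [h0] at hcor
        have hu := isCoprime_zero_right.mp hcor
        rcases Int.isUnit_iff.mp hu with h | h <;> omega
      have hrpos : 0 < r := lt_of_le_of_ne hr0 (Ne.symm hrne)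
      -- f (p/q) = f (r/q)
      have hsplit : (p : ℚ) / q = (r : ℚ) / q + ((p / q : ℤ) : ℚ) := by
        have hp : (p : ℚ) = (r : ℚ) + ((p / q : ℤ) : ℚ) * (q : ℚ) := by
          have : r + (p / q) * (q : ℤ) = p := by rw [hr, Int.emod_def]; ring
          exact_mod_cast congrArg (Int.cast : ℤ → ℚ) this.symm
        rw [hp]
        field_simp
      rw [hsplit, aux_per f hper]
      -- apply modularity at r/q
      have hxne : ((r : ℚ) / q) ≠ 0 := by
        apply div_ne_zero
        · exact_mod_cast hrne
        · exact_mod_cast hqz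
      rw [hmod _ hxne]
      have hrQ : ((r.toNat : ℕ) : ℚ) = (r : ℚ) := by
        exact_mod_cast congrArg (Int.cast : ℤ → ℚ) (Int.toNat_of_nonneg hr0)
      have hinv : (-1 / ((r : ℚ) / q)) = ((-(q : ℤ) : ℤ) : ℚ) / ((r.toNat : ℕ) : ℚ) := by
        rw [hrQ]
        push_cast
        field_simp
      rw [hinv]
      have hih := ih r.toNat (by omega) (-(q : ℤ)) ?_ ?_
      · rw [hih]
        have hrC : ((r.toNat : ℕ) : ℂ) = (r : ℂ) := by
          exact_mod_cast congrArg (Int.cast : ℤ → ℂ) (Int.toNat_of_nonneg hr0)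
        rw [hrC]
        have hrC0 : (r : ℂ) ≠ 0 := by exact_mod_cast hrne
        have hqC0 : ((q : ℕ) : ℂ) ≠ 0 := by exact_mod_cast hqz
        push_cast
        field_simp
        rw [div_pow, mul_right_comm, div_mul_cancel₀ _ (pow_ne_zero _ hqC0), mul_comm]
      · omega
      · rw [Int.toNat_of_nonneg hr0]
        have : IsCoprime r (-(q : ℤ)) := hcor.symm.neg_right
        exact Int.isCoprime_iff_gcd_eq_one.mp this

end

theorem stmt_0 (w : ℕ) (hw : 2 ≤ w) (hweven : Even w) (f : ℚ → ℂ)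
    (hper : ∀ x : ℚ, f x = f (x + 1))
    (hmod : ∀ x : ℚ, x ≠ 0 → f x = (x : ℂ) ^ w * f (-1 / x)) :
    ∃ c : ℂ, ∀ h k : ℤ, 0 < h →
      f ((k : ℚ) / (h : ℚ)) = c * ((Int.gcd h k : ℂ) / (h : ℂ)) ^ w := by
  refine ⟨f 0, fun h k hh => ?_⟩
  set g : ℕ := Int.gcd h k with hg
  have hgpos : 0 < g := Int.gcd_pos_of_ne_zero_left k (by omega)
  have hdh : (g : ℤ) ∣ h := Int.gcd_dvd_left h k
  have hdk : (g : ℤ) ∣ k := Int.gcd_dvd_right h k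
  obtain ⟨h', hh'⟩ := hdh
  obtain ⟨k', hk'⟩ := hdk
  have hh'pos : 0 < h' := by
    rcases lt_trichotomy h' 0 with hlt | he | hgt
    · nlinarith [hh' ▸ hh, (by exact_mod_cast hgpos : (0:ℤ) < g)]
    · simp [he] at hh'; omega
    · exact hgt
  have hgZ : (0:ℤ) < g := by exact_mod_cast hgpos
  have hcop : Int.gcd ((h'.toNat : ℕ) : ℤ) k' = 1 := by
    rw [Int.toNat_of_nonneg hh'pos.le]
    have hgne : (g : ℤ) ≠ 0 := by omega
    have h'eq : h / (g : ℤ) = h' := by rw [hh']; exact Int.mul_ediv_cancel_left _ hgne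
    have k'eq : k / (g : ℤ) = k' := by rw [hk']; exact Int.mul_ediv_cancel_left _ hgne
    have := Int.gcd_div_gcd_div_gcd (i := h) (j := k) (by exact_mod_cast hgpos)
    rwa [← hg, h'eq, k'eq] at this
  have key := aux_key w f hper hmod h'.toNat k' (by omega) hcop
  have hdivq : ((k : ℚ) / (h : ℚ)) = ((k' : ℚ) / ((h'.toNat : ℕ) : ℚ)) := by
    have hQ : ((h'.toNat : ℕ) : ℚ) = (h' : ℚ) := by
      exact_mod_cast congrArg (Int.cast : ℤ → ℚ) (Int.toNat_of_nonneg hh'pos.le)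
    rw [hQ, hh', hk']
    push_cast
    rw [mul_div_mul_left _ _ (by exact_mod_cast (by omega : (g:ℤ) ≠ 0))]
  rw [hdivq, key]
  have hgCne : (g : ℂ) ≠ 0 := Nat.cast_ne_zero.mpr (by omega)
  have hh'Cne : (h' : ℂ) ≠ 0 := by exact_mod_cast (by omega : h' ≠ 0)
  have hC : ((g : ℂ) / (h : ℂ)) = 1 / (h' : ℂ) := by
    rw [hh']
    push_cast
    field_simp
  rw [hC]
  have hh'C : ((h'.toNat : ℕ) : ℂ) = (h' : ℂ) := by
    exact_mod_cast congrArg (Int.cast : ℤ → ℂ) (Int.toNat_of_nonneg hh'pos.le)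
  rw [hh'C]
  have : (h' : ℂ) ≠ 0 := by exact_mod_cast (by omega : h' ≠ 0)
  field_simp
  rw [div_pow, one_pow, mul_assoc, mul_one_div_cancel (pow_ne_zero _ this), mul_one]
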